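/- For all real numbers a, b, every β > 1 and L > 0, one has (a - b)·(a·|a|_L^{2(β-1)} - b·|b|_L^{2(β-1)}) ≥ ((2β - 1)/β²)·(a·|a|_L^{β-1} - b·|b|_L^{β-1})², where t_L = sgn(t)·min(|t|, L) denotes the truncation of t at level L. -/

import Mathlib

open Set

lemma contQ {e : ℝ} (L : ℝ) (he : 0 ≤ e) :
    Continuous (fun t : ℝ => t * (min |t| L) ^ e) :=
  continuous_id.mul ((continuous_abs.min continuous_const).rpow_const (fun _ => Or.inr he))

lemma derivQ_inner {e L t : ℝ} (ht : t ≠ 0) (htL : |t| < L) :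
    HasDerivAt (fun s : ℝ => s * (min |s| L) ^ e) ((e + 1) * |t| ^ e) t := by
  rcases ht.lt_or_gt with hneg | hpos
  · have hmem : t ∈ Ioo (-L) 0 := ⟨by cases abs_lt.1 htL; linarith, hneg⟩
    have hev : ∀ᶠ s in nhds t, s * (min |s| L) ^ e = -((-s) ^ (e + 1)) := by
      filter_upwards [isOpen_Ioo.mem_nhds hmem] with s hs
      have h1 : |s| = -s := abs_of_neg hs.2
      have h2 : min |s| L = -s := by rw [h1]; exact min_eq_left (by linarith [hs.1])
      rw [h2, Real.rpow_add_one (neg_ne_zero.2 hs.2.ne)]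
      ring
    have h1 : HasDerivAt (fun y : ℝ => y ^ (e + 1)) ((e + 1) * (-t) ^ (e + 1 - 1)) (-t) :=
      Real.hasDerivAt_rpow_const (Or.inl (by linarith))
    have h2 : HasDerivAt (fun s : ℝ => -s) (-1) t := (hasDerivAt_id t).neg
    have h3 := (h1.comp t h2).neg
    have h4 : HasDerivAt (fun s : ℝ => -((-s) ^ (e + 1))) ((e + 1) * (-t) ^ e) t := by
      exact h3.congr_deriv (by simp)
    rw [abs_of_neg hneg]
    exact h4.congr_of_eventuallyEq hev
  · have hmem : t ∈ Ioo 0 L := ⟨hpos, by rwa [abs_of_pos hpos] at htL⟩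
    have hev : ∀ᶠ s in nhds t, s * (min |s| L) ^ e = s ^ (e + 1) := by
      filter_upwards [isOpen_Ioo.mem_nhds hmem] with s hs
      have h2 : min |s| L = s := by rw [abs_of_pos hs.1]; exact min_eq_left hs.2.le
      rw [h2, Real.rpow_add_one hs.1.ne']
      ring
    have h1 : HasDerivAt (fun y : ℝ => y ^ (e + 1)) ((e + 1) * t ^ (e + 1 - 1)) t :=
      Real.hasDerivAt_rpow_const (Or.inl hpos.ne')
    rw [abs_of_pos hpos]
    have h4 : HasDerivAt (fun y : ℝ => y ^ (e + 1)) ((e + 1) * t ^ e) t := by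
      convert h1 using 2; ring_nf
    exact h4.congr_of_eventuallyEq hev

lemma derivQ_outer {e L t : ℝ} (htL : L < |t|) :
    HasDerivAt (fun s : ℝ => s * (min |s| L) ^ e) (L ^ e) t := by
  have hev : ∀ᶠ s in nhds t, s * (min |s| L) ^ e = s * L ^ e := by
    have hopen : IsOpen {s : ℝ | L < |s|} := isOpen_lt continuous_const continuous_abs
    filter_upwards [hopen.mem_nhds htL] with s hs
    rw [min_eq_right (le_of_lt hs)]
  exact (hasDerivAt_mul_const (L ^ e)).congr_of_eventuallyEq hev

lemma keylem (a b β L : ℝ) (hβ : 1 < β) (hL : 0 < L) (hba : b ≤ a) :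
    (a - b) * (a * (min |a| L) ^ (2 * (β - 1)) - b * (min |b| L) ^ (2 * (β - 1))) ≥
      ((2 * β - 1) / β ^ 2) *
        (a * (min |a| L) ^ (β - 1) - b * (min |b| L) ^ (β - 1)) ^ 2 := by
  rcases eq_or_lt_of_le hba with rfl | hlt
  · simp
  set e : ℝ := β - 1 with he_def
  have he : 0 < e := by simp [he_def]; linarith
  set c : ℝ := (2 * β - 1) / β ^ 2 with hc_def
  have hβ0 : (0:ℝ) < β := by linarith
  have hc0 : 0 < c := by apply div_pos <;> nlinarith
  have hc1 : c ≤ 1 := by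
    rw [hc_def, div_le_one (by positivity)]; nlinarith [sq_nonneg (β - 1)]
  have hβne : β ≠ 0 := hβ0.ne'
  have hcβ : c * β ^ 2 = 2 * β - 1 := by rw [hc_def]; field_simp
  set lam : ℝ := (a * (min |a| L) ^ e - b * (min |b| L) ^ e) / (a - b) with hlam_def
  have hab : (0:ℝ) < a - b := by linarith
  have hlam : lam * (a - b) = a * (min |a| L) ^ e - b * (min |b| L) ^ e := by
    rw [hlam_def]; field_simp
  set F : ℝ → ℝ := fun t =>
    t * (min |t| L) ^ (2 * e) - 2 * c * lam * (t * (min |t| L) ^ e) + c * lam ^ 2 * t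
    with hF_def
  have hFc : Continuous F := by
    exact ((contQ L (by linarith)).sub (continuous_const.mul (contQ L he.le))).add
      (continuous_const.mul continuous_id)
  -- derivative nonneg facts
  have hsq : ∀ x : ℝ, (0:ℝ) ≤ x → x ^ (2 * e) = (x ^ e) ^ 2 := by
    intro x hx
    rw [show (2:ℝ) * e = e * 2 by ring, Real.rpow_mul hx, Real.rpow_two]
  -- inner pieces
  have hInner : ∀ t : ℝ, t ≠ 0 → |t| < L →
      HasDerivAt F ((2 * e + 1) * |t| ^ (2 * e)
        - 2 * c * lam * ((e + 1) * |t| ^ e) + c * lam ^ 2) t := by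
    intro t ht htL
    exact ((derivQ_inner (e := 2 * e) ht htL).sub
      ((derivQ_inner (e := e) ht htL).const_mul (2 * c * lam))).add
      ((hasDerivAt_id t).const_mul (c * lam ^ 2)) |>.congr_deriv (by ring)
  have hInner0 : ∀ t : ℝ,
      0 ≤ (2 * e + 1) * |t| ^ (2 * e) - 2 * c * lam * ((e + 1) * |t| ^ e) + c * lam ^ 2 := by
    intro t
    have h1 : |t| ^ (2 * e) = (|t| ^ e) ^ 2 := hsq _ (abs_nonneg t)
    have h2 : (2 * e + 1) = c * β ^ 2 := by rw [hcβ]; ring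
    have h3 : e + 1 = β := by ring
    rw [h1, h2, h3]
    nlinarith [sq_nonneg (β * |t| ^ e - lam), hc0.le]
  have hOuter : ∀ t : ℝ, L < |t| →
      HasDerivAt F (L ^ (2 * e) - 2 * c * lam * L ^ e + c * lam ^ 2) t := by
    intro t htL
    exact ((derivQ_outer (e := 2 * e) htL).sub
      ((derivQ_outer (e := e) htL).const_mul (2 * c * lam))).add
      ((hasDerivAt_id t).const_mul (c * lam ^ 2)) |>.congr_deriv (by ring)
  have hOuter0 : 0 ≤ L ^ (2 * e) - 2 * c * lam * L ^ e + c * lam ^ 2 := by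
    rw [hsq L hL.le]
    nlinarith [mul_nonneg hc0.le (sq_nonneg (L ^ e - lam)),
      mul_nonneg (sub_nonneg.2 hc1) (sq_nonneg (L ^ e))]
  -- monotonicity on pieces
  have M3 : MonotoneOn F (Icc 0 L) := by
    apply monotoneOn_of_hasDerivWithinAt_nonneg (convex_Icc 0 L) hFc.continuousOn
      (f' := fun t => (2 * e + 1) * |t| ^ (2 * e)
        - 2 * c * lam * ((e + 1) * |t| ^ e) + c * lam ^ 2)
    · intro x hx
      rw [interior_Icc] at hx
      exact (hInner x hx.1.ne' (by rw [abs_of_pos hx.1]; exact hx.2)).hasDerivWithinAt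
    · intro x _; exact hInner0 x
  have M2 : MonotoneOn F (Icc (-L) 0) := by
    apply monotoneOn_of_hasDerivWithinAt_nonneg (convex_Icc (-L) 0) hFc.continuousOn
      (f' := fun t => (2 * e + 1) * |t| ^ (2 * e)
        - 2 * c * lam * ((e + 1) * |t| ^ e) + c * lam ^ 2)
    · intro x hx
      rw [interior_Icc] at hx
      exact (hInner x hx.2.ne (by rw [abs_of_neg hx.2]; linarith [hx.1])).hasDerivWithinAt
    · intro x _; exact hInner0 x
  have M4 : MonotoneOn F (Ici L) := by
    apply monotoneOn_of_hasDerivWithinAt_nonneg (convex_Ici L) hFc.continuousOn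
      (f' := fun _ => L ^ (2 * e) - 2 * c * lam * L ^ e + c * lam ^ 2)
    · intro x hx
      rw [interior_Ici] at hx
      exact (hOuter x (by rw [abs_of_pos (hL.trans hx)]; exact hx)).hasDerivWithinAt
    · intro x _; exact hOuter0
  have M1 : MonotoneOn F (Iic (-L)) := by
    apply monotoneOn_of_hasDerivWithinAt_nonneg (convex_Iic (-L)) hFc.continuousOn
      (f' := fun _ => L ^ (2 * e) - 2 * c * lam * L ^ e + c * lam ^ 2)
    · intro x hx
      rw [interior_Iic] at hx
      exact (hOuter x (by rw [abs_of_neg (by linarith [mem_Iio.1 hx] : x < 0)]; linarith [mem_Iio.1 hx])).hasDerivWithinAt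
    · intro x _; exact hOuter0
  have Mlow : MonotoneOn F (Iic 0) := by
    have := M1.union_right M2 isGreatest_Iic ⟨⟨le_refl _, by linarith⟩, fun x hx => hx.1⟩
    rwa [Iic_union_Icc_eq_Iic (by linarith : -L ≤ 0)] at this
  have Mhigh : MonotoneOn F (Ici 0) := by
    have := M3.union_right M4 ⟨⟨by linarith, le_refl _⟩, fun x hx => hx.2⟩ isLeast_Ici
    rwa [Icc_union_Ici_eq_Ici (by linarith : (0:ℝ) ≤ L)] at this
  have Mono : Monotone F := Mlow.Iic_union_Ici Mhigh
  have hFba : b * (min |b| L) ^ (2 * e) - 2 * c * lam * (b * (min |b| L) ^ e) + c * lam ^ 2 * b ≤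
      a * (min |a| L) ^ (2 * e) - 2 * c * lam * (a * (min |a| L) ^ e) + c * lam ^ 2 * a :=
    Mono hba
  have h5 := mul_le_mul_of_nonneg_left hFba hab.le
  have hl1 := congrArg (· * (a * (min |a| L) ^ e - b * (min |b| L) ^ e)) hlam
  have hl2 := congrArg (· ^ 2) hlam
  nlinarith [h5, hl1, hl2]

theorem stmt1 (a b β L : ℝ) (hβ : 1 < β) (hL : 0 < L) :
    (a - b) * (a * (min |a| L) ^ (2 * (β - 1)) - b * (min |b| L) ^ (2 * (β - 1))) ≥
      ((2 * β - 1) / β ^ 2) *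
        (a * (min |a| L) ^ (β - 1) - b * (min |b| L) ^ (β - 1)) ^ 2 := by
  rcases le_total b a with hba | hab
  · exact keylem a b β L hβ hL hba
  · have H := keylem b a β L hβ hL hab
    have e1 : (a - b) * (a * (min |a| L) ^ (2 * (β - 1)) - b * (min |b| L) ^ (2 * (β - 1)))
        = (b - a) * (b * (min |b| L) ^ (2 * (β - 1)) - a * (min |a| L) ^ (2 * (β - 1))) := by
      ring
    have e2 : (a * (min |a| L) ^ (β - 1) - b * (min |b| L) ^ (β - 1)) ^ 2
        = (b * (min |b| L) ^ (β - 1) - a * (min |a| L) ^ (β - 1)) ^ 2 := by ring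
    rw [e1, e2]
    exact H
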